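/- Let R be a G-graded commutative ring such that for every σ in the support of the grading there exists u_σ ∈ R_σ with R_σ = R_e u_σ and Ann_{R_e}(u_σ) = {0} (where e is the identity of G). Then every polynomial in R_e[x] that is a regular element (non-zero-divisor) of R_e[x] is also a regular element of R[x]. -/

import Mathlib

open Polynomial

/-- If for every `σ` in the support of the grading there is `u_σ ∈ R_σ` with
`R_σ = R_e u_σ` and `Ann_{R_e}(u_σ) = 0`, then every polynomial in `R_e[x]` that is regular
(as an element of `R_e[x]`, i.e. killed by no nonzero polynomial with coefficients in `R_e`)
is regular in `R[x]`. (Here `e = 0` is the identity of the additively written group `G`.) -/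
theorem stmt_1 {G R : Type*} [AddGroup G] [DecidableEq G] [CommRing R]
    (𝒜 : G → AddSubgroup R) [GradedRing 𝒜]
    (hu : ∀ σ : G, 𝒜 σ ≠ ⊥ → ∃ u ∈ 𝒜 σ,
      (∀ a ∈ 𝒜 σ, ∃ r ∈ 𝒜 (0 : G), a = r * u) ∧
      (∀ r ∈ 𝒜 (0 : G), r * u = 0 → r = 0))
    (h : R[X]) (hcoeff : ∀ i, h.coeff i ∈ 𝒜 (0 : G))
    (hreg : ∀ p : R[X], (∀ i, p.coeff i ∈ 𝒜 (0 : G)) → p * h = 0 → p = 0) :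
    h ∈ nonZeroDivisors R[X] := by
  rw [mem_nonZeroDivisors_iff_right]
  intro p hp
  -- the σ-component map as an additive hom
  have key : ∀ σ : G, ∀ n : ℕ, (DirectSum.decompose 𝒜 (p.coeff n) σ : R) = 0 := by
    intro σ
    classical
    let f : R →+ R := (𝒜 σ).subtype.comp ((DFinsupp.evalAddMonoidHom σ).comp
      (DirectSum.decomposeAddEquiv 𝒜).toAddMonoidHom)
    have hf : ∀ a : R, f a = (DirectSum.decompose 𝒜 a σ : R) := fun a => rfl
    -- the σ-homogeneous component of p
    set pσ : R[X] := ∑ i ∈ p.support, C (f (p.coeff i)) * X ^ i with hpσdef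
    have hcσ : ∀ m, pσ.coeff m = f (p.coeff m) := by
      intro m
      rw [hpσdef, finset_sum_coeff]
      simp only [coeff_C_mul, coeff_X_pow, mul_ite, mul_one, mul_zero]
      rw [Finset.sum_ite_eq p.support m]
      split_ifs with hm
      · rfl
      · rw [Polynomial.notMem_support_iff.mp hm, map_zero]
    have hmul : ∀ a b : R, b ∈ 𝒜 0 → f (a * b) = f a * b := by
      intro a b hb
      have := DirectSum.coe_decompose_mul_add_of_right_mem 𝒜 (i := σ) hb (a := a)
      rwa [add_zero] at this
    have hmem : ∀ m, pσ.coeff m ∈ 𝒜 σ := by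
      intro m
      rw [hcσ]
      exact ((DirectSum.decompose 𝒜) (p.coeff m) σ).2
    -- pσ * h = 0
    have hpσh : pσ * h = 0 := by
      ext n
      rw [coeff_zero, coeff_mul]
      have : ∀ x ∈ Finset.HasAntidiagonal.antidiagonal n,
          pσ.coeff x.1 * h.coeff x.2 = f (p.coeff x.1 * h.coeff x.2) := by
        intro x _
        rw [hcσ, hmul _ _ (hcoeff x.2)]
      rw [Finset.sum_congr rfl this, ← map_sum, ← coeff_mul, hp, coeff_zero, map_zero]
    -- show pσ = 0
    have hpσ0 : pσ = 0 := by
      by_cases hbot : 𝒜 σ = ⊥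
      · ext m
        have := hmem m
        rw [hbot, AddSubgroup.mem_bot] at this
        simpa using this
      · obtain ⟨u, huσ, hgen, hann⟩ := hu σ hbot
        choose r hr0 hru using fun m => hgen (pσ.coeff m) (hmem m)
        set q : R[X] := ∑ i ∈ pσ.support, C (r i) * X ^ i with hqdef
        have hqc : ∀ m, q.coeff m = if m ∈ pσ.support then r m else 0 := by
          intro m
          rw [hqdef, finset_sum_coeff]
          simp only [coeff_C_mul, coeff_X_pow, mul_ite, mul_one, mul_zero]
          rw [Finset.sum_ite_eq pσ.support m]
        have hq0 : ∀ m, q.coeff m ∈ 𝒜 0 := by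
          intro m
          rw [hqc]
          split_ifs
          · exact hr0 m
          · exact zero_mem _
        have hqu : q * C u = pσ := by
          ext m
          rw [coeff_mul_C, hqc]
          split_ifs with hm
          · exact (hru m).symm
          · rw [zero_mul, (Polynomial.notMem_support_iff.mp hm)]
        have hqh : q * h = 0 := by
          have h1 : (q * h) * C u = 0 := by
            rw [mul_right_comm, hqu, hpσh]
          ext m
          rw [coeff_zero]
          have h2 : (q * h).coeff m * u = 0 := by
            have := congrArg (fun z => Polynomial.coeff z m) h1
            simpa [coeff_mul_C] using this
          refine hann _ ?_ h2
          rw [coeff_mul]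
          exact sum_mem fun x _ => by
            have := SetLike.mul_mem_graded (hq0 x.1) (hcoeff x.2)
            simpa using this
        have : q = 0 := hreg q hq0 hqh
        rw [← hqu, this, zero_mul]
    intro n
    rw [← hf, ← hcσ, hpσ0, coeff_zero]
  ext n
  rw [coeff_zero]
  have h1 : DirectSum.decompose 𝒜 (p.coeff n) = 0 :=
    DFinsupp.ext fun σ => Subtype.ext (key σ n)
  have h2 : DirectSum.decompose 𝒜 (p.coeff n) = DirectSum.decompose 𝒜 0 := by
    rw [h1, DirectSum.decompose_zero]
  exact (DirectSum.decompose 𝒜).injective h2
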